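/- Let k, r be positive integers and i an integer with 1 ≤ i ≤ r < k. Then in 𝓘 one has F(k,r,i) − (Σ_{l=1}^{k−r−1} 2^{l−1} G1((1^{i−1}, l+1, 1^{r−i}), k−r−l) + G1((1^r), k−r)) = 2^{k−r−1}·(1^{i−1}, k−r+1, 1^{r−i}). -/

import Mathlib

/-- The ℚ-vector space 𝓘 spanned by the indices: finitely supported ℚ-valued functions
on lists of positive integers (an index `k` is identified with the basis element
`Finsupp.single k 1`; all elements occurring below are supported on lists of positive
integers). -/
abbrev IndexSpace : Type := List ℕ →₀ ℚ

/-- The set of "cut points" of an index `k = (k₁,…,k_r)`: its proper partial sums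
`{k₁, k₁+k₂, …, k₁+⋯+k_{r-1}}`.  An index of weight `w` is determined by its cut set,
a subset of `{1,…,w-1}`. -/
def cuts (k : List ℕ) : Finset ℕ := (((k.scanl (· + ·) 0).drop 1).dropLast).toFinset

/-- The composition (index) of `w` determined by a set `S ⊆ {1,…,w-1}` of cut points:
if `S = {s₁ < ⋯ < s_m}` this is `(s₁, s₂ - s₁, …, w - s_m)`. -/
def compOfCuts (w : ℕ) (S : Finset ℕ) : List ℕ :=
  List.zipWith (· - ·) (S.sort (· ≤ ·) ++ [w]) (0 :: S.sort (· ≤ ·))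

/-- Hoffman's dual `k^∨` of an index `k`: the index of the same weight whose cut set is
the complement of that of `k` (i.e. exchange all commas and pluses in `k = 1□1□⋯□1`). -/
def hdual (k : List ℕ) : List ℕ := compOfCuts k.sum (Finset.Ico 1 k.sum \ cuts k)

/-- `φ(k) = (-1)^{dep(k)} ∑ (1□1□⋯□1, … , 1□⋯□1)`, the sum over all `2^{wt(k)-dep(k)}`
ways of choosing each within-block box of `k` to be a comma or a plus; equivalently the
sum of `Finsupp.single k' 1` over all indices `k'` whose cut set contains that of `k`. -/
noncomputable def phi (k : List ℕ) : IndexSpace :=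
  ((-1 : ℚ) ^ k.length) •
    ∑ S ∈ (Finset.Ico 1 k.sum \ cuts k).powerset,
      Finsupp.single (compOfCuts k.sum (cuts k ∪ S)) (1 : ℚ)

/-- The ℚ-linear extension of `φ` to 𝓘. -/
noncomputable def phiL (x : IndexSpace) : IndexSpace := x.sum fun k c => c • phi k

/-- Componentwise sum `k ⊕ e` of two sequences of the same length. -/
def oplus (k e : List ℕ) : List ℕ := List.zipWith (· + ·) k e

/-- `G₁(k,l) = ∑_{wt(e)=l, dep(e)=dep(k)} (k ⊕ e)`, the sum over sequences `e` of
nonnegative integers of weight `l` and length `dep(k)`. -/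
noncomputable def G1 (k : List ℕ) (l : ℕ) : IndexSpace :=
  ∑ e ∈ Finset.Nat.antidiagonalTuple k.length l,
    Finsupp.single (oplus k (List.ofFn e)) (1 : ℚ)

/-- `G₂(k,l) = ∑_{wt(e)=l, dep(e)=dep(k^∨)} (k^∨ ⊕ e)^∨`. -/
noncomputable def G2 (k : List ℕ) (l : ℕ) : IndexSpace :=
  ∑ e ∈ Finset.Nat.antidiagonalTuple (hdual k).length l,
    Finsupp.single (hdual (oplus (hdual k) (List.ofFn e))) (1 : ℚ)

/-- `G(k,l) = G₁(k,l) - G₂(k,l)`. -/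
noncomputable def G (k : List ℕ) (l : ℕ) : IndexSpace := G1 k l - G2 k l

/-- `F(k,r,i) = ∑_{k₁+⋯+k_r = k, kⱼ ≥ 1} 2^{k_i - 1} · (k₁,…,k_r)` (here `i` is 1-based,
with `1 ≤ i ≤ r`). -/
noncomputable def F (k r i : ℕ) : IndexSpace :=
  ∑ ks ∈ (Finset.Nat.antidiagonalTuple r k).filter (fun ks => ∀ j, 1 ≤ ks j),
    Finsupp.single (List.ofFn ks) ((2 : ℚ) ^ ((List.ofFn ks).getD (i - 1) 0 - 1))

/-- The index `(1^{i-1}, v, 1^{r-i})` (here `i` is 1-based, with `1 ≤ i ≤ r`). -/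
def midIdx (r i v : ℕ) : List ℕ :=
  List.replicate (i - 1) 1 ++ v :: List.replicate (r - i) 1

/-- `H(k,r,i) = F(k,r,i) - (∑_{l=1}^{k-r-1} 2^{l-1} G((1^{i-1}, l+1, 1^{r-i}), k-r-l)
+ G((1^r), k-r))`. -/
noncomputable def H (k r i : ℕ) : IndexSpace :=
  F k r i -
    ((∑ l ∈ Finset.Icc 1 (k - r - 1),
        (2 : ℚ) ^ (l - 1) • G (midIdx r i (l + 1)) (k - r - l)) +
      G (List.replicate r 1) (k - r))


section AuxLemmas

lemma midIdx_eq_ofFn (r i v : ℕ) (h1 : 1 ≤ i) (h2 : i ≤ r) :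
    midIdx r i v = List.ofFn (fun j : Fin r => if j.val = i - 1 then v else 1) := by
  apply List.ext_getElem
  · simp [midIdx]; omega
  · intro n hn hn'
    simp only [List.getElem_ofFn]
    simp only [midIdx] at hn ⊢
    rcases lt_trichotomy n (i-1) with h | h | h
    · rw [List.getElem_append_left (by simpa using h), List.getElem_replicate,
        if_neg (by omega)]
    · rw [List.getElem_append_right (by simp; omega)]
      have hm : n - (List.replicate (i-1) 1).length = 0 := by simp; omega
      simp only [hm, List.getElem_cons_zero]
      rw [if_pos h]
    · rw [List.getElem_append_right (by simp; omega)]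
      have hm : n - (List.replicate (i-1) 1).length = (n - i) + 1 := by simp; omega
      simp only [hm, List.getElem_cons_succ, List.getElem_replicate]
      rw [if_neg (by omega)]

lemma oplus_ofFn {n : ℕ} (f g : Fin n → ℕ) :
    oplus (List.ofFn f) (List.ofFn g) = List.ofFn (fun j => f j + g j) := by
  apply List.ext_getElem
  · simp [oplus]
  · intro m hm hm'
    simp [oplus, List.getElem_zipWith]

lemma geom_aux (b : ℕ) : ∑ l ∈ Finset.Icc 1 b, (2:ℚ)^(l-1) = 2^b - 1 := by
  induction b with
  | zero => simp
  | succ n ih =>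
    rw [Finset.sum_Icc_succ_top (by omega), ih]
    simp
    ring

lemma sum_ite_fin (r c v : ℕ) (hc : c < r) (hv : 1 ≤ v) :
    ∑ j : Fin r, (if (j : ℕ) = c then v else 1) = r - 1 + v := by
  set i0 : Fin r := ⟨c, hc⟩ with hi0
  have key : ∀ j : Fin r, (if (j : ℕ) = c then v else 1)
      = (if j = i0 then v - 1 else 0) + 1 := by
    intro j
    rcases eq_or_ne j i0 with h|h
    · simp [h, hi0]; omega
    · rw [if_neg (fun hh => h (Fin.ext (by simp [hi0, hh]))), if_neg h]
  rw [Finset.sum_congr rfl (fun j _ => key j), Finset.sum_add_distrib,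
      Finset.sum_ite_eq' Finset.univ i0]
  simp
  have := i0.isLt
  omega

lemma oplus_ofFn' {n m : ℕ} (f : Fin n → ℕ) (g : Fin m → ℕ) (h : m = n) :
    oplus (List.ofFn f) (List.ofFn g)
      = List.ofFn (fun j : Fin n => f j + g (Fin.cast h.symm j)) := by
  apply List.ext_getElem
  · simp [oplus, h]
  · intro p hp hp'
    simp [oplus, List.getElem_zipWith]

lemma G1_ofFn {n : ℕ} (f : Fin n → ℕ) (l : ℕ) :
    G1 (List.ofFn f) l = ∑ e ∈ Finset.Nat.antidiagonalTuple n l,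
      Finsupp.single (List.ofFn (fun j => f j + e j)) (1:ℚ) := by
  rw [G1]
  have h : (List.ofFn f).length = n := List.length_ofFn
  refine Finset.sum_nbij' (i := fun e => e ∘ Fin.cast h.symm) (j := fun e => e ∘ Fin.cast h)
    ?_ ?_ ?_ ?_ ?_
  · intro e he
    rw [Finset.Nat.mem_antidiagonalTuple] at he ⊢
    rw [← he]
    exact Fintype.sum_equiv (finCongr h.symm) (fun j => e (Fin.cast h.symm j)) e
      (fun j => rfl)
  · intro e he
    rw [Finset.Nat.mem_antidiagonalTuple] at he ⊢
    rw [← he]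
    exact Fintype.sum_equiv (finCongr h) (fun j => e (Fin.cast h j)) e (fun j => rfl)
  · intro e he; rfl
  · intro e he; rfl
  · intro e he
    exact congrArg (fun t => Finsupp.single t (1:ℚ)) (oplus_ofFn' f e h)

lemma G1_mid (k r i l : ℕ) (i0 : Fin r) (hi0 : (i0 : ℕ) = i - 1)
    (hi : 1 ≤ i) (hir : i ≤ r) (hl : l ≤ k - r) (hrk : r ≤ k) :
    G1 (midIdx r i (l+1)) (k - r - l) =
    ∑ ks ∈ ((Finset.Nat.antidiagonalTuple r k).filter (fun ks => ∀ j, 1 ≤ ks j)).filter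
        (fun ks => l + 1 ≤ ks i0),
      Finsupp.single (List.ofFn ks) (1:ℚ) := by
  have hii : i - 1 < r := by omega
  rw [midIdx_eq_ofFn r i (l+1) hi hir, G1_ofFn]
  refine Finset.sum_nbij'
    (i := fun e => fun j => (if (j : ℕ) = i - 1 then l+1 else 1) + e j)
    (j := fun ks => fun j => ks j - (if (j : ℕ) = i - 1 then l+1 else 1))
    ?_ ?_ ?_ ?_ ?_
  · intro e he
    rw [Finset.Nat.mem_antidiagonalTuple] at he
    simp only [Finset.mem_filter, Finset.Nat.mem_antidiagonalTuple]
    refine ⟨⟨?_, ?_⟩, ?_⟩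
    · rw [Finset.sum_add_distrib, he, sum_ite_fin r (i-1) (l+1) hii (by omega)]
      omega
    · intro j
      have : 1 ≤ (if (j : ℕ) = i - 1 then l+1 else 1) := by split <;> omega
      omega
    · rw [hi0, if_pos rfl]
      omega
  · intro ks hks
    simp only [Finset.mem_filter, Finset.Nat.mem_antidiagonalTuple] at hks
    obtain ⟨⟨hsum, hpos⟩, hge⟩ := hks
    rw [Finset.Nat.mem_antidiagonalTuple]
    have hmle : ∀ j : Fin r, (if (j : ℕ) = i - 1 then l+1 else 1) ≤ ks j := by
      intro j
      rcases eq_or_ne (j : ℕ) (i - 1) with h|h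
      · rw [if_pos h]
        have : j = i0 := Fin.ext (by rw [h, hi0])
        rw [this]; exact hge
      · rw [if_neg h]; exact hpos j
    have hkey : ∑ j : Fin r, ((if (j : ℕ) = i - 1 then l+1 else 1)
        + (ks j - (if (j : ℕ) = i - 1 then l+1 else 1))) = ∑ j, ks j :=
      Finset.sum_congr rfl (fun j _ => by have := hmle j; omega)
    beta_reduce
    rw [Finset.sum_add_distrib, sum_ite_fin r (i-1) (l+1) hii (by omega), hsum] at hkey
    omega
  · intro e he
    funext j
    beta_reduce
    omega
  · intro ks hks
    simp only [Finset.mem_filter, Finset.Nat.mem_antidiagonalTuple] at hks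
    obtain ⟨⟨hsum, hpos⟩, hge⟩ := hks
    funext j
    have hmle : (if (j : ℕ) = i - 1 then l+1 else 1) ≤ ks j := by
      rcases eq_or_ne (j : ℕ) (i - 1) with h|h
      · rw [if_pos h]
        have : j = i0 := Fin.ext (by rw [h, hi0])
        rw [this]; exact hge
      · rw [if_neg h]; exact hpos j
    beta_reduce
    omega
  · intro e he
    rfl

lemma replicate_eq_mid (r i : ℕ) (h1 : 1 ≤ i) (h2 : i ≤ r) :
    List.replicate r 1 = midIdx r i 1 := by
  rw [midIdx_eq_ofFn r i 1 h1 h2]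
  simp

lemma coef_aux (B a : ℕ) (hB : 1 ≤ B) (ha : 1 ≤ a) (ha2 : a ≤ B + 1) :
    (2:ℚ)^(a-1) - ((∑ l ∈ Finset.Icc 1 (B-1), if l + 1 ≤ a then (2:ℚ)^(l-1) else 0) + 1)
      = if a = B + 1 then 2^(B-1) else 0 := by
  have hfilter : (∑ l ∈ Finset.Icc 1 (B-1), if l + 1 ≤ a then (2:ℚ)^(l-1) else 0)
      = ∑ l ∈ Finset.Icc 1 (min (a-1) (B-1)), (2:ℚ)^(l-1) := by
    rw [← Finset.sum_filter]
    congr 1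
    ext l
    simp only [Finset.mem_filter, Finset.mem_Icc]
    omega
  rw [hfilter, geom_aux]
  rcases eq_or_ne a (B+1) with h|h
  · rw [if_pos h, h]
    have h1 : min (B+1-1) (B-1) = B - 1 := by omega
    rw [h1]
    simp only [Nat.add_sub_cancel]
    have h2 : (2:ℚ)^B = 2^(B-1) * 2 := by
      rw [← pow_succ]
      congr 1
      omega
    rw [h2]
    ring
  · rw [if_neg h]
    have h1 : min (a-1) (B-1) = a - 1 := by omega
    rw [h1]
    ring

end AuxLemmas

/-- **Lemma 1**.  For positive integers `k, r` and `1 ≤ i ≤ r < k`, in 𝓘 one has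
`F(k,r,i) - (∑_{l=1}^{k-r-1} 2^{l-1} G₁((1^{i-1}, l+1, 1^{r-i}), k-r-l) + G₁((1^r), k-r))
= 2^{k-r-1} · (1^{i-1}, k-r+1, 1^{r-i})`. -/
theorem lemma_one (k r i : ℕ) (hk : 0 < k) (hr : 0 < r) (hi : 1 ≤ i) (hir : i ≤ r)
    (hrk : r < k) :
    F k r i -
        ((∑ l ∈ Finset.Icc 1 (k - r - 1),
            (2 : ℚ) ^ (l - 1) • G1 (midIdx r i (l + 1)) (k - r - l)) +
          G1 (List.replicate r 1) (k - r)) =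
      (2 : ℚ) ^ (k - r - 1) • Finsupp.single (midIdx r i (k - r + 1)) (1 : ℚ) := by
  have hii : i - 1 < r := by omega
  have hB : 1 ≤ k - r := by omega
  set i0 : Fin r := ⟨i - 1, hii⟩ with hi0def
  have hi0 : (i0 : ℕ) = i - 1 := by rw [hi0def]
  set A := (Finset.Nat.antidiagonalTuple r k).filter (fun ks => ∀ j, 1 ≤ ks j) with hA
  have hG : ∀ l, l ≤ k - r → G1 (midIdx r i (l+1)) (k - r - l)
      = ∑ ks ∈ A, (if l + 1 ≤ ks i0 then (1:ℚ) else 0)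
          • Finsupp.single (List.ofFn ks) (1:ℚ) := by
    intro l hl
    rw [G1_mid k r i l i0 hi0 hi hir hl (le_of_lt hrk), ← hA, Finset.sum_filter]
    apply Finset.sum_congr rfl
    intro ks _
    by_cases h : l + 1 ≤ ks i0
    · rw [if_pos h, if_pos h, one_smul]
    · rw [if_neg h, if_neg h, zero_smul]
  have hF : F k r i = ∑ ks ∈ A, ((2:ℚ) ^ (ks i0 - 1))
      • Finsupp.single (List.ofFn ks) (1:ℚ) := by
    rw [F, ← hA]
    apply Finset.sum_congr rfl
    intro ks _
    have hlen : i - 1 < (List.ofFn ks).length := by simpa using hii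
    rw [List.getD_eq_getElem _ _ hlen, List.getElem_ofFn, Finsupp.smul_single', mul_one,
      hi0def]
  have hT1 : ∑ l ∈ Finset.Icc 1 (k - r - 1), (2:ℚ)^(l-1) • G1 (midIdx r i (l+1)) (k-r-l)
      = ∑ ks ∈ A, (∑ l ∈ Finset.Icc 1 (k-r-1), if l + 1 ≤ ks i0 then (2:ℚ)^(l-1) else 0)
          • Finsupp.single (List.ofFn ks) (1:ℚ) := by
    rw [Finset.sum_congr rfl (fun l hl => by
      rw [hG l (by simp only [Finset.mem_Icc] at hl; omega), Finset.smul_sum])]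
    rw [Finset.sum_comm]
    refine Finset.sum_congr rfl (fun ks _ => ?_)
    rw [Finset.sum_smul]
    refine Finset.sum_congr rfl (fun l _ => ?_)
    rw [smul_smul, mul_ite, mul_one, mul_zero]
  have hT2 : G1 (List.replicate r 1) (k - r)
      = ∑ ks ∈ A, (if 1 ≤ ks i0 then (1:ℚ) else 0)
          • Finsupp.single (List.ofFn ks) (1:ℚ) := by
    rw [replicate_eq_mid r i hi hir]
    have h0 := hG 0 (Nat.zero_le _)
    norm_num at h0
    rw [h0]
    apply Finset.sum_congr rfl
    intro ks _
    by_cases h : 1 ≤ ks i0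
    · rw [if_pos h, if_pos h, one_smul]
    · rw [if_neg h, if_neg h, zero_smul]
  have hbound : ∀ ks : Fin r → ℕ, ks ∈ A → ks i0 ≤ k - r + 1 := by
    intro ks hks
    rw [hA, Finset.mem_filter, Finset.Nat.mem_antidiagonalTuple] at hks
    obtain ⟨hsum, hpos⟩ := hks
    have h1 : ks i0 + ∑ j ∈ Finset.univ.erase i0, ks j = k := by
      rw [Finset.add_sum_erase _ _ (Finset.mem_univ i0), hsum]
    have h2 : (Finset.univ.erase i0).card • 1 ≤ ∑ j ∈ Finset.univ.erase i0, ks j :=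
      Finset.card_nsmul_le_sum _ _ _ (fun j _ => hpos j)
    have h3 : (Finset.univ.erase i0).card = r - 1 := by
      rw [Finset.card_erase_of_mem (Finset.mem_univ _), Finset.card_univ, Fintype.card_fin]
    rw [h3, smul_eq_mul, mul_one] at h2
    omega
  set m : Fin r → ℕ := fun j => if (j : ℕ) = i - 1 then k - r + 1 else 1 with hm
  have hmi0 : m i0 = k - r + 1 := by
    simp only [hm]
    simp [hi0]
  have hmA : m ∈ A := by
    rw [hA, Finset.mem_filter, Finset.Nat.mem_antidiagonalTuple]
    constructor
    · simp only [hm]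
      rw [sum_ite_fin r (i-1) (k-r+1) hii (by omega)]
      omega
    · intro j
      simp only [hm]
      split <;> omega
  have hiff : ∀ ks : Fin r → ℕ, ks ∈ A → (ks i0 = k - r + 1 ↔ ks = m) := by
    intro ks hks
    rw [hA, Finset.mem_filter, Finset.Nat.mem_antidiagonalTuple] at hks
    obtain ⟨hsum, hpos⟩ := hks
    constructor
    · intro hval
      funext j
      rcases eq_or_ne j i0 with h|h
      · rw [h, hval, hmi0]
      · have hmj : m j = 1 := by
          simp only [hm]
          exact if_neg (fun hh => h (Fin.ext (hh.trans hi0.symm)))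
        rw [hmj]
        by_contra hne
        have h2le : 2 ≤ ks j := by have := hpos j; omega
        have h1 : ks i0 + ∑ x ∈ Finset.univ.erase i0, ks x = k := by
          rw [Finset.add_sum_erase _ _ (Finset.mem_univ i0), hsum]
        have hlt : ∑ x ∈ Finset.univ.erase i0, (1:ℕ)
            < ∑ x ∈ Finset.univ.erase i0, ks x :=
          Finset.sum_lt_sum (fun x _ => hpos x)
            ⟨j, Finset.mem_erase.mpr ⟨h, Finset.mem_univ j⟩, by omega⟩
        rw [Finset.sum_const, Finset.card_erase_of_mem (Finset.mem_univ _),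
          Finset.card_univ, Fintype.card_fin, smul_eq_mul, mul_one] at hlt
        rw [hval] at h1
        omega
    · intro h
      rw [h, hmi0]
  have step : ∀ ks ∈ A,
      (2:ℚ)^(ks i0 - 1) • Finsupp.single (List.ofFn ks) (1:ℚ)
        - ((∑ l ∈ Finset.Icc 1 (k-r-1), if l + 1 ≤ ks i0 then (2:ℚ)^(l-1) else 0)
            • Finsupp.single (List.ofFn ks) (1:ℚ)
          + (if 1 ≤ ks i0 then (1:ℚ) else 0) • Finsupp.single (List.ofFn ks) (1:ℚ))
      = if ks = m then (2:ℚ)^(k-r-1) • Finsupp.single (List.ofFn ks) (1:ℚ) else 0 := by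
    intro ks hks
    have hpos : ∀ j, 1 ≤ ks j := by
      have hks2 := hks
      rw [hA, Finset.mem_filter] at hks2
      exact hks2.2
    rw [if_pos (hpos i0), ← add_smul, ← sub_smul,
      coef_aux (k-r) (ks i0) hB (hpos i0) (hbound ks hks), ite_smul, zero_smul]
    exact if_congr (by rw [hiff ks hks]) rfl rfl
  rw [hF, hT1, hT2, ← Finset.sum_add_distrib, ← Finset.sum_sub_distrib]
  refine Eq.trans (Finset.sum_congr rfl step) ?_
  rw [Finset.sum_ite_eq' A m, if_pos hmA, midIdx_eq_ofFn r i (k-r+1) hi hir, ← hm]
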